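/- Let g be a bijection of ℤ with bounded displacement, i.e., sup_j |g(j)-j| < ∞, and let a_{n,j} = exp(-n·e^{-|j|/n}). Then F_n(g) := Σ_{j∈ℤ} (a_{n,j}²/(1+a_{n,j}²))·e^{-|j|/n}·(|g(j)| - |j|) converges to 0 as n → ∞. -/

import Mathlib

open Filter

/-- `a n j = exp (-n e^{-|j|/n})`. -/
noncomputable def a (n : ℕ) (j : ℤ) : ℝ :=
  Real.exp (-(n : ℝ) * Real.exp (-|(j : ℝ)| / n))


noncomputable def Wf (n : ℝ) (x : ℝ) : ℝ :=
  Real.exp (-(2*n)*x) / (1 + Real.exp (-(2*n)*x)) * x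

lemma Wf_nonneg (n x : ℝ) (hx : 0 ≤ x) : 0 ≤ Wf n x := by
  unfold Wf; positivity

lemma Wf_le (n x : ℝ) (hx : 0 ≤ x) : Wf n x ≤ x := by
  unfold Wf
  have h1 : Real.exp (-(2*n)*x) / (1 + Real.exp (-(2*n)*x)) ≤ 1 := by
    rw [div_le_one (by positivity)]
    linarith [Real.exp_pos (-(2*n)*x)]
  nlinarith [Real.exp_pos (-(2*n)*x)]

set_option maxHeartbeats 1000000 in
lemma Wf_key (n : ℝ) (hn : 1 ≤ n) (A B : ℝ) (hA : 0 < A) (hAB : A ≤ B) (hBA : B ≤ 4*A) :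
    |Wf n B - Wf n A| ≤ 20/n * (Real.exp (-(n*A)/4) - Real.exp (-(n*B)/4)) := by
  have hn0 : 0 < n := by linarith
  have hB0 : 0 < B := lt_of_lt_of_le hA hAB
  obtain ⟨qA, hqA⟩ : ∃ q, Real.exp (-(2*n)*A) = q := ⟨_, rfl⟩
  obtain ⟨qB, hqB⟩ : ∃ q, Real.exp (-(2*n)*B) = q := ⟨_, rfl⟩
  obtain ⟨E, hE⟩ : ∃ q, Real.exp (-(n*B)/4) = q := ⟨_, rfl⟩
  have hqA0 : 0 < qA := hqA ▸ Real.exp_pos _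
  have hqB0 : 0 < qB := hqB ▸ Real.exp_pos _
  have hE0 : 0 < E := hE ▸ Real.exp_pos _
  obtain ⟨sA, hsA⟩ : ∃ q, qA/(1+qA) = q := ⟨_, rfl⟩
  obtain ⟨sB, hsB⟩ : ∃ q, qB/(1+qB) = q := ⟨_, rfl⟩
  have hqBA : qB ≤ qA := by
    rw [← hqA, ← hqB]; apply Real.exp_le_exp.2; nlinarith
  have hsA0 : 0 ≤ sA := by rw [← hsA]; positivity
  have hsB0 : 0 ≤ sB := by rw [← hsB]; positivity
  have hdiff : sA - sB = (qA - qB) / ((1+qA)*(1+qB)) := by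
    rw [← hsA, ← hsB]; field_simp; ring
  have hsBsA : sB ≤ sA := by
    rw [← sub_nonneg, hdiff]
    apply div_nonneg (by linarith) (by positivity)
  have bound1 : sB ≤ E := by
    have h1 : sB ≤ qB := by
      rw [← hsB, div_le_iff₀ (by positivity)]; nlinarith
    have h2 : qB ≤ E := by
      rw [← hqB, ← hE]; apply Real.exp_le_exp.2; nlinarith
    linarith
  have bound2 : sA - sB ≤ qA - qB := by
    rw [hdiff]
    have h2 : (1:ℝ) ≤ (1+qA)*(1+qB) := by nlinarith
    calc (qA - qB)/((1+qA)*(1+qB)) ≤ (qA - qB)/1 :=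
          div_le_div_of_nonneg_left (by linarith) (by norm_num) h2
      _ = qA - qB := by ring
  have bound3 : qA - qB ≤ qA * (2*n*(B-A)) := by
    have hqBeq : qB = qA * Real.exp (-(2*n)*(B-A)) := by
      rw [← hqA, ← hqB, ← Real.exp_add]; ring_nf
    have h1 : 1 - Real.exp (-(2*n)*(B-A)) ≤ 2*n*(B-A) := by
      have := Real.add_one_le_exp (-(2*n)*(B-A))
      nlinarith
    rw [hqBeq]; nlinarith
  have bound4 : qA ≤ E^2 := by
    have hh : E^2 = Real.exp (-(n*B)/2) := by
      rw [← hE, sq, ← Real.exp_add]; ring_nf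
    rw [hh, ← hqA]; apply Real.exp_le_exp.2; nlinarith
  have bound5 : 2*(n*B)*E ≤ 4 := by
    have ht0 : 0 < n*B := mul_pos hn0 hB0
    obtain ⟨p, hp⟩ : ∃ q, Real.exp (-(n*B/8)) = q := ⟨_, rfl⟩
    have hp0 : 0 < p := hp ▸ Real.exp_pos _
    have hEp : E = p * p := by
      rw [← hE, ← hp, ← Real.exp_add]; ring_nf
    have h2 : Real.exp (n*B/8) * p = 1 := by
      rw [← hp, ← Real.exp_add, show n*B/8 + -(n*B/8) = 0 by ring, Real.exp_zero]
    have h8 : p * (1 + n*B/8) ≤ 1 := by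
      have h := Real.add_one_le_exp (n*B/8)
      nlinarith
    have hx0 : 0 ≤ p*(1+n*B/8) := by positivity
    have h9 : (p*(1+n*B/8))^2 ≤ 1 := by nlinarith [h8, hx0]
    have h10 : 2*(n*B)*(p*p)*(1+n*B/8)^2 ≤ 2*(n*B) := by nlinarith
    have h11 : 2*(n*B) ≤ 4*(1+n*B/8)^2 := by nlinarith [sq_nonneg (n*B-8)]
    have h12 : (2*(n*B)*(p*p))*(1+n*B/8)^2 ≤ 4*(1+n*B/8)^2 := by linarith
    have h13 : 2*(n*B)*(p*p) ≤ 4 :=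
      le_of_mul_le_mul_right (by linarith) (by positivity : (0:ℝ) < (1+n*B/8)^2)
    rw [hEp]; exact h13
  have hBA0 : 0 ≤ B - A := by linarith
  have combine : |Wf n B - Wf n A| ≤ 5 * E * (B - A) := by
    have hW : Wf n B - Wf n A = (B - A) * sB - A * (sA - sB) := by
      unfold Wf; rw [hqA, hqB, hsA, hsB]; ring
    have t1 : 0 ≤ (B - A) * sB := mul_nonneg hBA0 hsB0
    have t1' : (B - A) * sB ≤ (B - A) * E := mul_le_mul_of_nonneg_left bound1 hBA0
    have t2 : 0 ≤ A * (sA - sB) := mul_nonneg hA.le (by linarith)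
    have t2' : A * (sA - sB) ≤ A * (qA * (2*n*(B-A))) :=
      mul_le_mul_of_nonneg_left (le_trans bound2 bound3) hA.le
    have t3 : A * qA ≤ B * E^2 :=
      mul_le_mul hAB bound4 hqA0.le hB0.le
    have t3' : A * (qA * (2*n*(B-A))) ≤ B * E^2 * (2*n*(B-A)) := by
      have := mul_le_mul_of_nonneg_right t3 (by positivity : (0:ℝ) ≤ 2*n*(B-A))
      linarith [this]
    have t4 : B * E^2 * (2*n*(B-A)) ≤ 4 * E * (B-A) := by
      have := mul_le_mul_of_nonneg_right bound5 (mul_nonneg hE0.le hBA0)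
      nlinarith [this]
    rw [hW, abs_sub_le_iff]
    constructor
    · nlinarith
    · nlinarith
  have final : 5 * E * (B - A) ≤ 20/n * (Real.exp (-(n*A)/4) - E) := by
    have hsplit : Real.exp (-(n*A)/4) = E * Real.exp (n*(B-A)/4) := by
      rw [← hE, ← Real.exp_add]; ring_nf
    have h1 : 1 + n*(B-A)/4 ≤ Real.exp (n*(B-A)/4) := by
      have := Real.add_one_le_exp (n*(B-A)/4); linarith
    rw [hsplit, ← sub_nonneg]
    have heq : 20/n * (E * Real.exp (n*(B-A)/4) - E) - 5 * E * (B - A)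
        = 20/n * E * ((Real.exp (n*(B-A)/4) - 1) - n*(B-A)/4) := by
      field_simp; ring
    rw [heq]
    apply mul_nonneg (by positivity)
    linarith
  rw [hE]
  linarith

noncomputable def Wn (n r : ℕ) : ℝ := Wf n (Real.exp (-(r:ℝ)/n))

noncomputable def qq (n r : ℕ) : ℝ := Real.exp (-((n:ℝ) * Real.exp (-(r:ℝ)/n))/4)

lemma Wn_nonneg (n r : ℕ) : 0 ≤ Wn n r := Wf_nonneg _ _ (Real.exp_pos _).le

lemma Wn_le (n r : ℕ) : Wn n r ≤ Real.exp (-(r:ℝ)/n) := Wf_le _ _ (Real.exp_pos _).le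

lemma exp_pow (n : ℕ) (r : ℕ) : Real.exp (-(r:ℝ)/n) = (Real.exp (-1/(n:ℝ)))^r := by
  rw [← Real.exp_nat_mul]; ring_nf

lemma exp_base_lt_one (n : ℕ) (hn : 1 ≤ n) : Real.exp (-1/(n:ℝ)) < 1 := by
  apply Real.exp_lt_one_iff.2
  have : (0:ℝ) < n := by exact_mod_cast hn
  apply div_neg_of_neg_of_pos (by norm_num) this

lemma summable_exp_decay (n : ℕ) (hn : 1 ≤ n) :
    Summable (fun r : ℕ => Real.exp (-(r:ℝ)/n)) := by
  simp_rw [exp_pow]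
  exact summable_geometric_of_lt_one (Real.exp_pos _).le (exp_base_lt_one n hn)

lemma Wn_tendsto (n : ℕ) (hn : 1 ≤ n) : Tendsto (fun r => Wn n r) atTop (nhds 0) := by
  apply squeeze_zero (fun r => Wn_nonneg n r) (fun r => Wn_le n r)
  simp_rw [exp_pow]
  exact tendsto_pow_atTop_nhds_zero_of_lt_one (Real.exp_pos _).le (exp_base_lt_one n hn)

lemma Delta_bound (n : ℕ) (hn : 1 ≤ n) (r : ℕ) :
    |Wn n r - Wn n (r+1)| ≤ 20/(n:ℝ) * (qq n (r+1) - qq n r) := by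
  have hn1 : (1:ℝ) ≤ n := by exact_mod_cast hn
  have hn0 : (0:ℝ) < n := by linarith
  have hA : (0:ℝ) < Real.exp (-((r:ℝ)+1)/n) := Real.exp_pos _
  have hAB : Real.exp (-((r:ℝ)+1)/n) ≤ Real.exp (-(r:ℝ)/n) := by
    apply Real.exp_le_exp.2
    rw [div_le_div_iff₀ hn0 hn0]; nlinarith
  have hBA : Real.exp (-(r:ℝ)/n) ≤ 4 * Real.exp (-((r:ℝ)+1)/n) := by
    have hsplit : Real.exp (-(r:ℝ)/n) = Real.exp (-((r:ℝ)+1)/n) * Real.exp (1/(n:ℝ)) := by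
      rw [← Real.exp_add]; congr 1; ring
    have h1 : Real.exp (1/(n:ℝ)) ≤ Real.exp 1 := by
      apply Real.exp_le_exp.2
      rw [div_le_one hn0]; exact hn1
    have h2 : Real.exp 1 < 4 := by
      have := Real.exp_one_lt_d9; linarith
    rw [hsplit]
    nlinarith [Real.exp_pos (-((r:ℝ)+1)/n)]
  have key := Wf_key n hn1 _ _ hA hAB hBA
  have e1 : Wn n r = Wf n (Real.exp (-(r:ℝ)/n)) := rfl
  have e2 : Wn n (r+1) = Wf n (Real.exp (-((r:ℝ)+1)/n)) := by
    unfold Wn; norm_num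
  have e3 : qq n (r+1) = Real.exp (-((n:ℝ) * Real.exp (-((r:ℝ)+1)/n))/4) := by
    unfold qq; norm_num
  have e4 : qq n r = Real.exp (-((n:ℝ) * Real.exp (-(r:ℝ)/n))/4) := rfl
  rw [e1, e2, e3, e4]
  exact key

lemma qq_le_one (n r : ℕ) : qq n r ≤ 1 := by
  apply Real.exp_le_one_iff.2
  have := Real.exp_pos (-(r:ℝ)/n)
  have : (0:ℝ) ≤ (n:ℝ) * Real.exp (-(r:ℝ)/n) := by positivity
  linarith

lemma qq_nonneg (n r : ℕ) : 0 ≤ qq n r := (Real.exp_pos _).le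

lemma Delta_sum_bound (n : ℕ) (hn : 1 ≤ n) (M : ℕ) :
    ∑ r ∈ Finset.range M, |Wn n r - Wn n (r+1)| ≤ 20/(n:ℝ) := by
  have hn0 : (0:ℝ) < n := by exact_mod_cast hn
  calc ∑ r ∈ Finset.range M, |Wn n r - Wn n (r+1)|
      ≤ ∑ r ∈ Finset.range M, 20/(n:ℝ) * (qq n (r+1) - qq n r) :=
        Finset.sum_le_sum (fun r _ => Delta_bound n hn r)
    _ = 20/(n:ℝ) * (qq n M - qq n 0) := by
        rw [← Finset.mul_sum]
        congr 1
        have := Finset.sum_range_sub (fun r => qq n r) M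
        simpa using this
    _ ≤ 20/(n:ℝ) := by
        have h1 := qq_le_one n M
        have h2 := qq_nonneg n 0
        have h3 : (0:ℝ) ≤ 20/(n:ℝ) := by positivity
        nlinarith

lemma Delta_abs_le (n r : ℕ) : |Wn n r - Wn n (r+1)| ≤ 2 * Real.exp (-(r:ℝ)/n) := by
  have h1 := Wn_nonneg n r
  have h2 := Wn_nonneg n (r+1)
  have h3 := Wn_le n r
  have h4 := Wn_le n (r+1)
  have h5 : Real.exp (-((r+1:ℕ):ℝ)/n) ≤ Real.exp (-(r:ℝ)/n) := by
    apply Real.exp_le_exp.2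
    rcases Nat.eq_zero_or_pos n with h | h
    · subst h; norm_num
    · have hn0 : (0:ℝ) < n := by exact_mod_cast h
      rw [div_le_div_iff₀ hn0 hn0]
      push_cast
      nlinarith
  rw [abs_sub_le_iff]
  constructor <;> nlinarith

lemma tele_hasSum (n : ℕ) (hn : 1 ≤ n) (m : ℕ) :
    HasSum (fun k => Wn n (k + m) - Wn n (k + m + 1)) (Wn n m) := by
  have hs : Summable (fun k : ℕ => 2 * Real.exp (-((k + m : ℕ):ℝ)/n)) := by
    have h1 := ((summable_exp_decay n hn).mul_left 2).comp_injective
      (add_left_injective m)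
    exact h1
  have hsum : Summable (fun k => Wn n (k + m) - Wn n (k + m + 1)) := by
    apply Summable.of_norm
    apply Summable.of_nonneg_of_le (fun k => norm_nonneg _) (fun k => ?_) hs
    rw [Real.norm_eq_abs]
    exact Delta_abs_le n (k + m)
  rw [hsum.hasSum_iff_tendsto_nat]
  have htel : ∀ M : ℕ, ∑ k ∈ Finset.range M, (Wn n (k + m) - Wn n (k + m + 1))
      = Wn n m - Wn n (M + m) := by
    intro M
    have h2 := Finset.sum_range_sub' (fun k => Wn n (k + m)) M
    simp only [Nat.zero_add, show ∀ k:ℕ, k+1+m = k+m+1 from fun k => by omega] at h2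
    exact h2
  have hlim : Tendsto (fun M : ℕ => Wn n m - Wn n (M + m)) atTop (nhds (Wn n m)) := by
    have h3 : Tendsto (fun M : ℕ => Wn n (M + m)) atTop (nhds 0) :=
      (Wn_tendsto n hn).comp (tendsto_add_atTop_nat m)
    simpa using tendsto_const_nhds.sub h3
  exact hlim.congr (fun M => (htel M).symm)


lemma Sz_bound (g : Equiv.Perm ℤ) (K : ℕ) (hK : ∀ j : ℤ, |g j - j| ≤ (K:ℤ)) (r : ℕ) :
    |∑ j ∈ Finset.Icc (-(r:ℤ)) (r:ℤ), (|g j| - |j|)| ≤ 4*(K:ℤ)^2 := by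
  set I : Finset ℤ := Finset.Icc (-(r:ℤ)) (r:ℤ) with hI
  set A : Finset ℤ := I.image g with hA
  have hmemI : ∀ k : ℤ, k ∈ I ↔ |k| ≤ (r:ℤ) := by
    intro k; rw [hI, Finset.mem_Icc, abs_le]
  have hsum1 : ∑ j ∈ I, |g j| = ∑ k ∈ A, |k| := by
    rw [hA, Finset.sum_image (fun x _ y _ h => g.injective h)]
  have hsplit : ∑ j ∈ I, (|g j| - |j|) = ∑ k ∈ A \ I, |k| - ∑ k ∈ I \ A, |k| := by
    rw [Finset.sum_sub_distrib, hsum1]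
    have e1 : ∑ k ∈ A ∩ I, |k| + ∑ k ∈ A \ I, |k| = ∑ k ∈ A, |k| :=
      Finset.sum_inter_add_sum_sdiff A I _
    have e2 : ∑ k ∈ I ∩ A, |k| + ∑ k ∈ I \ A, |k| = ∑ k ∈ I, |k| :=
      Finset.sum_inter_add_sum_sdiff I A _
    rw [← e1, ← e2, Finset.inter_comm]
    ring
  have hcard : A.card = I.card := Finset.card_image_of_injective I g.injective
  have hcardeq : (I \ A).card = (A \ I).card := by
    have c1 := Finset.card_sdiff_add_card_inter A I
    have c2 := Finset.card_sdiff_add_card_inter I A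
    rw [Finset.inter_comm] at c2
    omega
  set N : ℕ := (A \ I).card with hN
  -- element bounds
  have hAI : ∀ k ∈ A \ I, (r:ℤ)+1 ≤ |k| ∧ |k| ≤ (r:ℤ) + K := by
    intro k hk
    rw [Finset.mem_sdiff] at hk
    obtain ⟨hkA, hkI⟩ := hk
    rw [hA, Finset.mem_image] at hkA
    obtain ⟨j, hjI, hj⟩ := hkA
    rw [hmemI] at hjI
    rw [hmemI] at hkI
    push_neg at hkI
    constructor
    · omega
    · have h1 := hK j
      have h2 : |k| ≤ |g j - j| + |j| := by
        rw [← hj]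
        have := abs_add_le (g j - j) j
        simpa using this
      omega
  have hIA : ∀ k ∈ I \ A, (r:ℤ)+1-K ≤ |k| ∧ |k| ≤ (r:ℤ) := by
    intro k hk
    rw [Finset.mem_sdiff] at hk
    obtain ⟨hkI, hkA⟩ := hk
    rw [hmemI] at hkI
    refine ⟨?_, hkI⟩
    have hpre : ¬ ((g.symm k) ∈ I) := by
      intro hmem
      apply hkA
      rw [hA, Finset.mem_image]
      exact ⟨g.symm k, hmem, g.apply_symm_apply k⟩
    rw [hmemI] at hpre
    push_neg at hpre
    have h1 := hK (g.symm k)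
    rw [g.apply_symm_apply] at h1
    have h2 : |g.symm k| ≤ |k - g.symm k| + |k| := by
      have := abs_add_le (g.symm k - k) k
      have h3 : |g.symm k - k| = |k - g.symm k| := abs_sub_comm _ _
      simp at this ⊢
      omega
    omega
  -- N ≤ 2K
  have hNle : (N:ℤ) ≤ 2*K := by
    have hsub : A \ I ⊆ Finset.Icc (-((r:ℤ)+K)) ((r:ℤ)+K) \ I := by
      intro k hk
      rw [Finset.mem_sdiff]
      refine ⟨?_, (Finset.mem_sdiff.1 hk).2⟩
      rw [Finset.mem_Icc]
      have := (hAI k hk).2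
      rw [abs_le] at this
      omega
    have hIsub : I ⊆ Finset.Icc (-((r:ℤ)+K)) ((r:ℤ)+K) := by
      rw [hI]
      apply Finset.Icc_subset_Icc <;> omega
    have hc := Finset.card_le_card hsub
    rw [Finset.card_sdiff_of_subset hIsub] at hc
    rw [Int.card_Icc, Int.card_Icc] at hc
    rw [hN]
    omega
  -- sum bounds
  have s1 : ∑ k ∈ A \ I, |k| ≤ (N:ℤ) * ((r:ℤ)+K) := by
    calc ∑ k ∈ A \ I, |k| ≤ ∑ _k ∈ A \ I, ((r:ℤ)+K) :=
          Finset.sum_le_sum (fun k hk => (hAI k hk).2)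
      _ = (N:ℤ) * ((r:ℤ)+K) := by rw [Finset.sum_const, hN]; push_cast; ring
  have s2 : (N:ℤ) * ((r:ℤ)+1) ≤ ∑ k ∈ A \ I, |k| := by
    calc (N:ℤ) * ((r:ℤ)+1) = ∑ _k ∈ A \ I, ((r:ℤ)+1) := by
          rw [Finset.sum_const, hN]; push_cast; ring
      _ ≤ ∑ k ∈ A \ I, |k| := Finset.sum_le_sum (fun k hk => (hAI k hk).1)
  have s3 : ∑ k ∈ I \ A, |k| ≤ (N:ℤ) * (r:ℤ) := by
    calc ∑ k ∈ I \ A, |k| ≤ ∑ _k ∈ I \ A, (r:ℤ) :=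
          Finset.sum_le_sum (fun k hk => (hIA k hk).2)
      _ = (N:ℤ) * (r:ℤ) := by rw [Finset.sum_const, hcardeq, hN]; push_cast; ring
  have s4 : (N:ℤ) * ((r:ℤ)+1-K) ≤ ∑ k ∈ I \ A, |k| := by
    calc (N:ℤ) * ((r:ℤ)+1-K) = ∑ _k ∈ I \ A, ((r:ℤ)+1-K) := by
          rw [Finset.sum_const, hcardeq, hN]; push_cast; ring
      _ ≤ ∑ k ∈ I \ A, |k| := Finset.sum_le_sum (fun k hk => (hIA k hk).1)
  rw [hsplit, abs_le]
  have hN0 : (0:ℤ) ≤ (N:ℤ) := Int.natCast_nonneg N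
  constructor <;> nlinarith

-- the bound for a single n ≥ 1
lemma main_bound (g : Equiv.Perm ℤ) (K : ℕ) (hK : ∀ j : ℤ, |g j - j| ≤ (K:ℤ))
    (n : ℕ) (hn : 1 ≤ n) :
    |∑' j : ℤ, a n j ^ 2 / (1 + a n j ^ 2) * Real.exp (-|(j : ℝ)| / n)
        * (|(g j : ℝ)| - |(j : ℝ)|)| ≤ 80 * (K:ℝ)^2 / n := by
  have hn0 : (0:ℝ) < n := by exact_mod_cast hn
  set d : ℤ → ℝ := fun j => |(g j : ℝ)| - |(j:ℝ)| with hd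
  set Δ : ℕ → ℝ := fun r => Wn n r - Wn n (r+1) with hΔ
  set P : ℕ × ℤ → ℝ := fun p => if p.2.natAbs ≤ p.1 then Δ p.1 * d p.2 else 0 with hP
  -- |d j| ≤ K
  have hdK : ∀ j : ℤ, |d j| ≤ (K:ℝ) := by
    intro j
    have h1 : |(|(g j : ℝ)| - |(j:ℝ)|)| ≤ |(g j : ℝ) - (j:ℝ)| := abs_abs_sub_abs_le_abs_sub _ _
    have h2 : |(g j : ℝ) - (j:ℝ)| ≤ (K:ℝ) := by
      have := hK j
      have h3 : ((|g j - j| : ℤ) : ℝ) ≤ ((K:ℤ):ℝ) := by exact_mod_cast this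
      push_cast at h3
      convert h3 using 2
    exact h1.trans h2
  -- membership condition
  have hcond : ∀ (r : ℕ) (j : ℤ), (j.natAbs ≤ r ↔ j ∈ Finset.Icc (-(r:ℤ)) (r:ℤ)) := by
    intro r j; rw [Finset.mem_Icc]; omega
  -- term rewrite
  have hterm : ∀ j : ℤ,
      a n j ^ 2 / (1 + a n j ^ 2) * Real.exp (-|(j : ℝ)| / n) * d j
        = Wn n j.natAbs * d j := by
    intro j
    have habs : |(j : ℝ)| = ((j.natAbs : ℕ) : ℝ) := by
      rw [Nat.cast_natAbs, Int.cast_abs]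
    have ha2 : a n j ^ 2 = Real.exp (-(2*(n:ℝ)) * Real.exp (-((j.natAbs:ℕ):ℝ)/n)) := by
      rw [a, habs, sq, ← Real.exp_add]; ring_nf
    rw [Wn, Wf, ha2, habs]
  -- Sr and bound
  set Sr : ℕ → ℝ := fun r => ∑ j ∈ Finset.Icc (-(r:ℤ)) (r:ℤ), d j with hSr
  have hSrb : ∀ r, |Sr r| ≤ 4*(K:ℝ)^2 := by
    intro r
    have h1 := Sz_bound g K hK r
    have h2 : Sr r = ((∑ j ∈ Finset.Icc (-(r:ℤ)) (r:ℤ), (|g j| - |j|) : ℤ) : ℝ) := by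
      rw [hSr]; push_cast; rfl
    rw [h2, ← Int.cast_abs]
    exact_mod_cast h1
  -- summability of P
  have hQs : Summable (fun p : ℕ × ℤ => if p.2.natAbs ≤ p.1 then |Δ p.1| * (K:ℝ) else 0) := by
    rw [summable_prod_of_nonneg]
    · constructor
      · intro r
        apply summable_of_ne_finset_zero (s := Finset.Icc (-(r:ℤ)) (r:ℤ))
        intro j hj
        rw [if_neg]
        rw [← hcond r j] at hj
        omega
      · apply Summable.of_nonneg_of_le (f := fun r : ℕ => (2*(r:ℝ)+1) * (2 * Real.exp (-(r:ℝ)/n) * K))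
          (fun r => tsum_nonneg (fun j => by positivity)) ?_ ?_
        · intro r
          have e1 : ∑' (j : ℤ), (if j.natAbs ≤ r then |Δ r| * (K:ℝ) else 0)
              = ∑ j ∈ Finset.Icc (-(r:ℤ)) (r:ℤ), (if j.natAbs ≤ r then |Δ r| * (K:ℝ) else 0) := by
            apply tsum_eq_sum
            intro j hj
            rw [if_neg]
            rw [← hcond r j] at hj
            omega
          have e2 : ∑ j ∈ Finset.Icc (-(r:ℤ)) (r:ℤ), (if j.natAbs ≤ r then |Δ r| * (K:ℝ) else 0)
              = ∑ _j ∈ Finset.Icc (-(r:ℤ)) (r:ℤ), (|Δ r| * (K:ℝ)) := by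
            apply Finset.sum_congr rfl
            intro j hj
            rw [if_pos ((hcond r j).2 hj)]
          rw [e1, e2, Finset.sum_const, Int.card_Icc]
          have hcard : ((r:ℤ) + 1 - -(r:ℤ)).toNat = 2*r+1 := by omega
          rw [hcard, nsmul_eq_mul]
          have h1 : |Δ r| ≤ 2 * Real.exp (-(r:ℝ)/n) := Delta_abs_le n r
          have h2 : (0:ℝ) ≤ K := Nat.cast_nonneg K
          have h3 : ((2*r+1 : ℕ) : ℝ) = 2*(r:ℝ)+1 := by push_cast; ring
          rw [h3]
          show (2*(r:ℝ)+1) * (|Δ r| * (K:ℝ)) ≤ (2*(r:ℝ)+1) * (2 * Real.exp (-(r:ℝ)/n) * K)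
          have h4 : (0:ℝ) ≤ 2*(r:ℝ)+1 := by positivity
          exact mul_le_mul_of_nonneg_left
            (mul_le_mul_of_nonneg_right h1 h2) h4
        · -- Summable (2r+1) * (2 exp(-r/n) K)
          have hb := summable_pow_mul_geometric_of_norm_lt_one 1
            (r := Real.exp (-1/(n:ℝ))) (by
              rw [Real.norm_eq_abs, abs_of_pos (Real.exp_pos _)]
              exact exp_base_lt_one n hn)
          have hb2 := ((hb.mul_left (4*(K:ℝ))).add
            ((summable_geometric_of_lt_one (Real.exp_pos (-1/(n:ℝ))).le
            (exp_base_lt_one n hn)).mul_left (2*(K:ℝ))))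
          apply hb2.congr
          intro r
          rw [exp_pow]
          push_cast
          ring
    · intro p
      positivity
  have hPs : Summable P := by
    apply Summable.of_norm
    apply Summable.of_nonneg_of_le (fun p => norm_nonneg _) ?_ hQs
    intro p
    simp only [hP, Real.norm_eq_abs]
    by_cases h : p.2.natAbs ≤ p.1
    · rw [if_pos h, if_pos h, abs_mul]
      exact mul_le_mul_of_nonneg_left (hdK p.2) (abs_nonneg _)
    · rw [if_neg h, if_neg h, abs_zero]
  -- inner sums over j
  have hinner_j : ∀ r : ℕ, ∑' j : ℤ, P (r, j) = Δ r * Sr r := by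
    intro r
    have h1 : ∑' j : ℤ, P (r, j) = ∑ j ∈ Finset.Icc (-(r:ℤ)) (r:ℤ), P (r, j) := by
      apply tsum_eq_sum
      intro j hj
      simp only [hP]
      rw [if_neg]
      rw [← hcond r j] at hj
      omega
    rw [h1, hSr, Finset.mul_sum]
    apply Finset.sum_congr rfl
    intro j hj
    simp only [hP]
    rw [if_pos ((hcond r j).2 hj)]
  -- inner sums over r
  have hinner_r : ∀ j : ℤ, HasSum (fun r => P (r, j)) (Wn n j.natAbs * d j) := by
    intro j
    set m := j.natAbs with hm
    have h1 : HasSum (fun r : ℕ => if m ≤ r then Δ r else 0) (Wn n m) := by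
      rw [← hasSum_nat_add_iff' m]
      have e1 : (fun k => if m ≤ k + m then Δ (k + m) else 0) = fun k => Δ (k + m) := by
        funext k; rw [if_pos (by omega)]
      have e2 : ∑ i ∈ Finset.range m, (if m ≤ i then Δ i else 0) = 0 := by
        apply Finset.sum_eq_zero
        intro i hi
        rw [Finset.mem_range] at hi
        rw [if_neg (by omega)]
      rw [e1, e2, sub_zero]
      exact tele_hasSum n hn m
    have h2 := h1.mul_right (d j)
    apply h2.congr_fun
    intro r
    simp only [hP, ite_mul, zero_mul, hm]
  -- assembly
  have hsum_rs : Summable (fun r => Δ r * Sr r) := by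
    apply Summable.of_norm
    apply Summable.of_nonneg_of_le (fun r => norm_nonneg _)
      (f := fun r : ℕ => 2 * Real.exp (-(r:ℝ)/n) * (4*(K:ℝ)^2)) ?_ ?_
    · intro r
      rw [Real.norm_eq_abs, abs_mul]
      have h1 := Delta_abs_le n r
      have h2 := hSrb r
      have h4 : (0:ℝ) ≤ 4*(K:ℝ)^2 := by positivity
      nlinarith [abs_nonneg (Δ r), abs_nonneg (Sr r), Real.exp_pos (-(r:ℝ)/n)]
    · exact (summable_exp_decay n hn).mul_left 2 |>.mul_right _
  have hmain : ∑' j : ℤ, a n j ^ 2 / (1 + a n j ^ 2) * Real.exp (-|(j : ℝ)| / n) * d j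
      = ∑' r : ℕ, Δ r * Sr r := by
    calc ∑' j : ℤ, a n j ^ 2 / (1 + a n j ^ 2) * Real.exp (-|(j : ℝ)| / n) * d j
        = ∑' j : ℤ, Wn n j.natAbs * d j := tsum_congr hterm
      _ = ∑' j : ℤ, ∑' r : ℕ, P (r, j) := tsum_congr (fun j => ((hinner_r j).tsum_eq).symm)
      _ = ∑' r : ℕ, ∑' j : ℤ, P (r, j) :=
          Summable.tsum_comm' (f := fun (r:ℕ) (j:ℤ) => P (r, j)) hPs
            (fun r => hPs.prod_factor r) (fun j => (hinner_r j).summable)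
      _ = ∑' r : ℕ, Δ r * Sr r := tsum_congr hinner_j
  rw [hmain]
  -- final bound
  have hsum_abs : Summable (fun r => |Δ r| * |Sr r|) := by
    simpa [abs_mul] using hsum_rs.abs
  have habs : |∑' r : ℕ, Δ r * Sr r| ≤ ∑' r : ℕ, |Δ r| * |Sr r| := by
    have := norm_tsum_le_tsum_norm (f := fun r => Δ r * Sr r) hsum_rs.abs
    simpa [abs_mul] using this
  have hle : ∑' r : ℕ, |Δ r| * |Sr r| ≤ 20/(n:ℝ) * (4*(K:ℝ)^2) := by
    apply Summable.tsum_le_of_sum_range_le hsum_abs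
    intro M
    calc ∑ r ∈ Finset.range M, |Δ r| * |Sr r|
        ≤ ∑ r ∈ Finset.range M, |Δ r| * (4*(K:ℝ)^2) := by
          apply Finset.sum_le_sum
          intro r _
          exact mul_le_mul_of_nonneg_left (hSrb r) (abs_nonneg _)
      _ = (∑ r ∈ Finset.range M, |Δ r|) * (4*(K:ℝ)^2) := by rw [Finset.sum_mul]
      _ ≤ 20/(n:ℝ) * (4*(K:ℝ)^2) := by
          apply mul_le_mul_of_nonneg_right (Delta_sum_bound n hn M) (by positivity)
  have heq : 20/(n:ℝ) * (4*(K:ℝ)^2) = 80 * (K:ℝ)^2 / n := by ring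
  linarith [habs, hle]

theorem F_tendsto_zero (g : Equiv.Perm ℤ) (hg : ∃ c : ℝ, ∀ j : ℤ, |(g j : ℝ) - j| ≤ c) :
    Tendsto (fun n : ℕ =>
        ∑' j : ℤ, a n j ^ 2 / (1 + a n j ^ 2) * Real.exp (-|(j : ℝ)| / n)
          * (|(g j : ℝ)| - |(j : ℝ)|))
      atTop (nhds 0) := by
  obtain ⟨c, hc⟩ := hg
  set K : ℕ := ⌈c⌉₊ with hKdef
  have hK : ∀ j : ℤ, |g j - j| ≤ (K:ℤ) := by
    intro j
    have h1 := hc j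
    have h2 : c ≤ (K:ℝ) := Nat.le_ceil c
    have h3 : ((|g j - j| : ℤ) : ℝ) = |(g j : ℝ) - (j:ℝ)| := by
      push_cast; rfl
    have h4 : ((|g j - j| : ℤ) : ℝ) ≤ ((K:ℤ):ℝ) := by
      rw [h3]; push_cast; linarith
    exact_mod_cast h4
  apply squeeze_zero_norm' (a := fun n : ℕ => 80 * (K:ℝ)^2 / n)
  · filter_upwards [eventually_ge_atTop 1] with n hn
    rw [Real.norm_eq_abs]
    exact main_bound g K hK n hn
  · exact tendsto_const_div_atTop_nhds_zero_nat _
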